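/- Let A be a Wheeler NFA. Then the interval determinization A^d of A, ordered by the interval order <ⁱ, is itself a Wheeler DFA: the order <ⁱ on the states I_α of A^d satisfies the Wheeler axioms, and L(A^d) = L(A). -/

import Mathlib

variable {V : Type*} {A : Type*}

/-- `Reaches E s α v`: the string `α` labels a path in the labeled graph `E`
from the state `s` to the state `v`. -/
inductive Reaches (E : V → A → V → Prop) (s : V) : List A → V → Prop
  | nil : Reaches E s [] s
  | snoc {α : List A} {u w : V} {a : A} :
      Reaches E s α u → E u a w → Reaches E s (α ++ [a]) w

/-- Co-lexicographic (strict) order on strings: lexicographic order of reverses. -/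
def ColexLt [LinearOrder A] (α β : List A) : Prop :=
  List.Lex (· < ·) α.reverse β.reverse

/-- `r` is a strict total order. -/
def StrictTotal (r : V → V → Prop) : Prop :=
  (∀ x, ¬ r x x) ∧ (∀ x y z, r x y → r y z → r x z) ∧
  (∀ x y : V, x ≠ y → r x y ∨ r y x)

/-- `r` is a Wheeler order for the labeled graph `E`: a strict total order on states
such that in-degree-0 states precede all states with positive in-degree, edges with
strictly smaller labels point to strictly smaller states, and equally-labeled edges
from ordered sources point to weakly ordered targets. -/
def WheelerRel [LinearOrder A] (E : V → A → V → Prop) (r : V → V → Prop) : Prop :=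
  StrictTotal r ∧
  (∀ x w : V, (∀ u a, ¬ E u a x) → (∃ u a, E u a w) → r x w) ∧
  (∀ u₁ a₁ v₁ u₂ a₂ v₂, E u₁ a₁ v₁ → E u₂ a₂ v₂ → a₁ < a₂ → r v₁ v₂) ∧
  (∀ u₁ v₁ u₂ v₂ a, E u₁ a v₁ → E u₂ a v₂ → r u₁ u₂ → r v₁ v₂ ∨ v₁ = v₂)

/-- The language accepted by the automaton `(V, E, F, s)`. -/
def Lang (E : V → A → V → Prop) (F : Set V) (s : V) : Set (List A) :=
  {α | ∃ w ∈ F, Reaches E s α w}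

/-- `Pref(L(A))`: the set of prefixes of accepted strings. -/
def PrefL (E : V → A → V → Prop) (F : Set V) (s : V) : Set (List A) :=
  {α | ∃ β, α ++ β ∈ Lang E F s}

/-- `I_u`: the strings in `Pref(L(A))` labeling a path from `s` to `u`. -/
def Iset (E : V → A → V → Prop) (F : Set V) (s u : V) : Set (List A) :=
  {α | α ∈ PrefL E F s ∧ Reaches E s α u}

/-- `I_α`: the set of states reached from `s` by a path labeled `α`. -/
def Istr (E : V → A → V → Prop) (s : V) (α : List A) : Set V :=
  {w | Reaches E s α w}

/-- States of the interval determinization: the sets `I_α` for `α ∈ Pref(L(A))`. -/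
def DetStates (E : V → A → V → Prop) (F : Set V) (s : V) : Set (Set V) :=
  {S | ∃ α ∈ PrefL E F s, S = Istr E s α}

/-- Edges of the interval determinization: `(I_α, I_{αe}, e)` for `αe ∈ Pref(L(A))`. -/
def DetEdge (E : V → A → V → Prop) (F : Set V) (s : V) :
    Set V → A → Set V → Prop :=
  fun S e T => ∃ α, α ∈ PrefL E F s ∧ (α ++ [e]) ∈ PrefL E F s ∧
    S = Istr E s α ∧ T = Istr E s (α ++ [e])

/-- The interval order `<ⁱ` induced by a state order `r`. -/
def IntvLt (r : V → V → Prop) (I J : Set V) : Prop :=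
  (∃ x ∈ I, ∀ y ∈ J, r x y) ∨ (∃ y ∈ J, ∀ x ∈ I, r x y)


section AuxiliaryLemmas

variable {V : Type*} {A : Type*}

lemma reaches_snoc' {E : V → A → V → Prop} {s : V} {π : List A} {v : V}
    (h : Reaches E s π v) :
    ∀ (α : List A) (a : A), π = α ++ [a] → ∃ u, Reaches E s α u ∧ E u a v := by
  cases h with
  | nil => intro α a hα; exact absurd hα (by simp)
  | @snoc β u w b h1 h2 =>
    intro α a hα
    obtain ⟨hβ, hb⟩ := List.append_inj' hα rfl
    obtain rfl : b = a := by simpa using hb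
    exact ⟨u, hβ ▸ h1, h2⟩

lemma reaches_prefix {E : V → A → V → Prop} {s : V} {π : List A} {w : V}
    (h : Reaches E s π w) :
    ∀ (γ δ : List A), π = γ ++ δ → ∃ u, Reaches E s γ u := by
  induction h with
  | nil =>
    intro γ δ hγ
    obtain ⟨rfl, rfl⟩ : γ = [] ∧ δ = [] := by
      constructor <;> [exact (List.append_eq_nil_iff.mp hγ.symm).1; exact (List.append_eq_nil_iff.mp hγ.symm).2]
    exact ⟨_, Reaches.nil⟩
  | @snoc β u w b h1 h2 ih =>
    intro γ δ hγ
    rcases List.eq_nil_or_concat δ with rfl | ⟨δ', d, rfl⟩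
    · refine ⟨w, ?_⟩
      rw [List.append_nil] at hγ
      exact hγ ▸ Reaches.snoc h1 h2
    · rw [List.concat_eq_append, ← List.append_assoc] at hγ
      obtain ⟨hβ, -⟩ := List.append_inj' hγ rfl
      exact ih γ δ' hβ

lemma nonempty_Istr {E : V → A → V → Prop} {F : Set V} {s : V} {α : List A}
    (hα : α ∈ PrefL E F s) : ∃ u, Reaches E s α u := by
  obtain ⟨β, w, hwF, hw⟩ := hα
  exact reaches_prefix hw α β rfl

lemma colex_tri [LinearOrder A] (α β : List A) : α = β ∨ ColexLt α β ∨ ColexLt β α := by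
  rcases trichotomous (r := List.Lex ((· < ·) : A → A → Prop)) α.reverse β.reverse with h | h | h
  · exact Or.inr (Or.inl h)
  · exact Or.inl (List.reverse_injective h)
  · exact Or.inr (Or.inr h)

lemma colex_trans [LinearOrder A] {α β γ : List A}
    (h1 : ColexLt α β) (h2 : ColexLt β γ) : ColexLt α γ := by
  exact List.lex_trans (fun h h' => lt_trans h h') h1 h2

lemma colex_concat [LinearOrder A] {γ δ : List A} {e : A}
    (h : ColexLt (γ ++ [e]) (δ ++ [e])) : ColexLt γ δ := by
  simp only [ColexLt, List.reverse_append, List.reverse_singleton,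
    List.singleton_append] at h
  cases h with
  | cons h => exact h
  | rel h => exact absurd h (lt_irrefl e)

/-- The crossing lemma: if `α ≺ β` co-lexicographically, `u ∈ I_α`, `v ∈ I_β`
and `v` precedes `u` in the Wheeler order, then also `v ∈ I_α` and `u ∈ I_β`. -/
lemma crossing [LinearOrder A] {E : V → A → V → Prop} {s : V} {r : V → V → Prop}
    (hsrc : ∀ u a, ¬ E u a s) (hW : WheelerRel E r) :
    ∀ (n : ℕ) (α β : List A) (u v : V), β.length ≤ n → ColexLt α β →
      Reaches E s α u → Reaches E s β v → r v u →
      Reaches E s α v ∧ Reaches E s β u := by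
  obtain ⟨⟨hirr, htrans, htot⟩, hax1, hax2, hax3⟩ := hW
  intro n
  induction n with
  | zero =>
    intro α β u v hlen hlt hu hv hvu
    obtain rfl : β = [] := List.length_eq_zero_iff.mp (Nat.le_zero.mp hlen)
    rw [ColexLt, List.reverse_nil] at hlt
    exact absurd hlt (fun h => by revert h; generalize α.reverse = l; intro h; cases h)
  | succ n ih =>
    intro α β u v hlen hlt hu hv hvu
    cases hv with
    | nil =>
      rw [ColexLt, List.reverse_nil] at hlt
      exact absurd hlt (fun h => by revert h; generalize α.reverse = l; intro h; cases h)
    | @snoc β' v' v b h1 h2 =>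
      cases hu with
      | nil =>
        exact absurd (htrans _ _ _ hvu (hax1 s v hsrc ⟨v', b, h2⟩)) (hirr v)
      | @snoc α' u' u a g1 g2 =>
        simp only [ColexLt, List.reverse_append, List.reverse_singleton,
          List.singleton_append] at hlt
        have hlen' : β'.length ≤ n := by
          simp only [List.length_append, List.length_singleton] at hlen; omega
        cases hlt with
        | rel hab =>
          exact absurd (htrans _ _ _ hvu (hax2 _ _ _ _ _ _ g2 h2 hab)) (hirr v)
        | cons hlt' =>
          by_cases hq : u' = v'
          · subst hq
            exact ⟨Reaches.snoc g1 h2, Reaches.snoc h1 g2⟩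
          · rcases htot u' v' hq with h' | h'
            · rcases hax3 _ _ _ _ _ g2 h2 h' with huv | h''
              · exact absurd (htrans _ _ _ hvu huv) (hirr v)
              · subst h''
                exact ⟨Reaches.snoc g1 g2, Reaches.snoc h1 h2⟩
            · obtain ⟨c1, c2⟩ := ih α' β' u' v' hlen' hlt' g1 h1 h'
              exact ⟨Reaches.snoc c1 h2, Reaches.snoc c2 g2⟩

/-- From the crossing lemma: `α ≺ β` and `I_α ≠ I_β` imply `I_α <ⁱ I_β`. -/
lemma intv_of_colex [LinearOrder A] {E : V → A → V → Prop} {s : V} {r : V → V → Prop}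
    (hsrc : ∀ u a, ¬ E u a s) (hW : WheelerRel E r) {α β : List A}
    (hlt : ColexLt α β) (hne : Istr E s α ≠ Istr E s β) :
    IntvLt r (Istr E s α) (Istr E s β) := by
  obtain ⟨⟨hirr, htrans, htot⟩, hax1, hax2, hax3⟩ := hW
  unfold IntvLt
  by_cases hsub : Istr E s α ⊆ Istr E s β
  · have hns : ¬ Istr E s β ⊆ Istr E s α := fun h => hne (Set.Subset.antisymm hsub h)
    rw [Set.not_subset] at hns
    obtain ⟨v, hv, hvn⟩ := hns
    refine Or.inr ⟨v, hv, fun x hx => ?_⟩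
    have hxv : x ≠ v := fun h => hvn (h ▸ hx)
    rcases htot x v hxv with h | h
    · exact h
    · exact absurd (crossing hsrc ⟨⟨hirr, htrans, htot⟩, hax1, hax2, hax3⟩
        β.length α β x v le_rfl hlt hx hv h).1 hvn
  · rw [Set.not_subset] at hsub
    obtain ⟨u, hu, hun⟩ := hsub
    refine Or.inl ⟨u, hu, fun y hy => ?_⟩
    have huy : u ≠ y := fun h => hun (h ▸ hy)
    rcases htot u y huy with h | h
    · exact h
    · exact absurd (crossing hsrc ⟨⟨hirr, htrans, htot⟩, hax1, hax2, hax3⟩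
        β.length α β u y le_rfl hlt hu hy h).2 hun

/-- From the crossing lemma: `α ≺ β` implies `¬ (I_β <ⁱ I_α)`. -/
lemma not_intv_of_colex [LinearOrder A] {E : V → A → V → Prop} {s : V} {r : V → V → Prop}
    (hsrc : ∀ u a, ¬ E u a s) (hW : WheelerRel E r) {α β : List A}
    (hlt : ColexLt α β) (hneα : ∃ u, Reaches E s α u) (hneβ : ∃ v, Reaches E s β v) :
    ¬ IntvLt r (Istr E s β) (Istr E s α) := by
  obtain ⟨⟨hirr, htrans, htot⟩, hax1, hax2, hax3⟩ := hW
  intro h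
  unfold IntvLt at h
  rcases h with ⟨x, hx, hall⟩ | ⟨y, hy, hall⟩
  · obtain ⟨u, hu⟩ := hneα
    have hxu : r x u := hall u hu
    have := (crossing hsrc ⟨⟨hirr, htrans, htot⟩, hax1, hax2, hax3⟩
      β.length α β u x le_rfl hlt hu hx hxu).1
    exact hirr x (hall x this)
  · obtain ⟨v, hv⟩ := hneβ
    have hvy : r v y := hall v hv
    have := (crossing hsrc ⟨⟨hirr, htrans, htot⟩, hax1, hax2, hax3⟩
      β.length α β y v le_rfl hlt hy hv hvy).2
    exact hirr y (hall y this)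

lemma intv_irrefl {r : V → V → Prop} (hirr : ∀ x, ¬ r x x) (S : Set V) :
    ¬ IntvLt r S S := by
  intro h
  unfold IntvLt at h
  rcases h with ⟨x, hx, hall⟩ | ⟨x, hx, hall⟩ <;> exact hirr x (hall x hx)

lemma prefL_of_concat {E : V → A → V → Prop} {F : Set V} {s : V} {α : List A} {e : A}
    (h : α ++ [e] ∈ PrefL E F s) : α ∈ PrefL E F s := by
  obtain ⟨β, hβ⟩ := h
  exact ⟨[e] ++ β, by rwa [← List.append_assoc]⟩

end AuxiliaryLemmas

/-- The interval determinization `A^d` of a Wheeler NFA `A`, ordered by the interval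
order `<ⁱ`, is itself a Wheeler DFA: `<ⁱ` is a strict total order on the states of
`A^d` satisfying the Wheeler axioms, and `L(A^d) = L(A)`. -/
theorem stmt10 {V A : Type*} [LinearOrder A]
    (E : V → A → V → Prop) (F : Set V) (s : V) (r : V → V → Prop)
    (hsrc : ∀ u a, ¬ E u a s)
    (hsuniq : ∀ x : V, (∀ u a, ¬ E u a x) → x = s)
    (hreach : ∀ x : V, ∃ α, Reaches E s α x)
    (hW : WheelerRel E r) :
    -- A^d is deterministic
    (∀ S e T T', DetEdge E F s S e T → DetEdge E F s S e T' → T = T') ∧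
    -- <ⁱ is a strict total order on the states of A^d
    (∀ S ∈ DetStates E F s, ¬ IntvLt r S S) ∧
    (∀ S ∈ DetStates E F s, ∀ T ∈ DetStates E F s, ∀ U ∈ DetStates E F s,
      IntvLt r S T → IntvLt r T U → IntvLt r S U) ∧
    (∀ S ∈ DetStates E F s, ∀ T ∈ DetStates E F s,
      S ≠ T → IntvLt r S T ∨ IntvLt r T S) ∧
    -- Wheeler axiom: in-degree-0 states of A^d precede states with in-degree > 0
    (∀ S ∈ DetStates E F s, ∀ T ∈ DetStates E F s,
      (∀ S' e, ¬ DetEdge E F s S' e S) → (∃ S' e, DetEdge E F s S' e T) →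
        IntvLt r S T) ∧
    -- Wheeler axiom: strictly smaller labels go to strictly smaller states
    (∀ S₁ e₁ T₁ S₂ e₂ T₂, DetEdge E F s S₁ e₁ T₁ → DetEdge E F s S₂ e₂ T₂ →
      e₁ < e₂ → IntvLt r T₁ T₂) ∧
    -- Wheeler axiom: equal labels from ordered sources go to weakly ordered targets
    (∀ S₁ T₁ S₂ T₂ e, DetEdge E F s S₁ e T₁ → DetEdge E F s S₂ e T₂ →
      IntvLt r S₁ S₂ → IntvLt r T₁ T₂ ∨ T₁ = T₂) ∧
    -- L(A^d) = L(A)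
    (∀ α : List A,
      (α ∈ PrefL E F s ∧ ∃ β ∈ Lang E F s, Istr E s α = Istr E s β) ↔
        α ∈ Lang E F s) := by
  obtain ⟨⟨hirr, htrans, htot⟩, hax1, hax2, hax3⟩ := hW
  have hWfull : WheelerRel E r := ⟨⟨hirr, htrans, htot⟩, hax1, hax2, hax3⟩
  refine ⟨?_, ?_, ?_, ?_, ?_, ?_, ?_, ?_⟩
  · -- determinism
    intro S e T T' h h'
    unfold DetEdge at h h'
    obtain ⟨α, hα, hαe, hS, rfl⟩ := h
    obtain ⟨α', hα', hα'e, hS', rfl⟩ := h'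
    have hsets : Istr E s α = Istr E s α' := hS.symm.trans hS'
    have hiff : ∀ u, Reaches E s α u ↔ Reaches E s α' u := fun u => Set.ext_iff.mp hsets u
    ext w
    constructor
    · intro hw
      obtain ⟨u, hu, hE⟩ := reaches_snoc' hw _ _ rfl
      exact Reaches.snoc ((hiff u).mp hu) hE
    · intro hw
      obtain ⟨u, hu, hE⟩ := reaches_snoc' hw _ _ rfl
      exact Reaches.snoc ((hiff u).mpr hu) hE
  · -- irreflexivity
    intro S _
    exact intv_irrefl hirr S
  · -- transitivity
    intro S hS T hT U hU h1 h2
    simp only [DetStates, Set.mem_setOf_eq] at hS hT hU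
    obtain ⟨α, hα, rfl⟩ := hS
    obtain ⟨β, hβ, rfl⟩ := hT
    obtain ⟨γ, hγ, rfl⟩ := hU
    have neα := nonempty_Istr hα
    have neβ := nonempty_Istr hβ
    have neγ := nonempty_Istr hγ
    rcases colex_tri α γ with rfl | h | h
    · exact absurd h1 (by
        rcases colex_tri α β with rfl | hb | hb
        · exact fun h' => intv_irrefl hirr _ h'
        · intro _; exact (not_intv_of_colex hsrc hWfull hb neα neβ) h2
        · exact not_intv_of_colex hsrc hWfull hb neβ neα)
    · by_cases hEq : Istr E s α = Istr E s γ
      · exfalso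
        rw [hEq] at h1
        rcases colex_tri γ β with rfl | hb | hb
        · exact intv_irrefl hirr _ h2
        · exact (not_intv_of_colex hsrc hWfull hb neγ neβ) h2
        · exact (not_intv_of_colex hsrc hWfull hb neβ neγ) h1
      · exact intv_of_colex hsrc hWfull h hEq
    · exfalso
      rcases colex_tri α β with rfl | hb | hb
      · exact intv_irrefl hirr _ h1
      · exact (not_intv_of_colex hsrc hWfull (colex_trans h hb) neγ neβ) h2
      · exact (not_intv_of_colex hsrc hWfull hb neβ neα) h1
  · -- totality
    intro S hS T hT hne
    simp only [DetStates, Set.mem_setOf_eq] at hS hT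
    obtain ⟨α, hα, rfl⟩ := hS
    obtain ⟨β, hβ, rfl⟩ := hT
    rcases colex_tri α β with rfl | h | h
    · exact absurd rfl hne
    · exact Or.inl (intv_of_colex hsrc hWfull h hne)
    · exact Or.inr (intv_of_colex hsrc hWfull h (fun h' => hne h'.symm))
  · -- in-degree-0 axiom
    intro S hS T hT hnoS hinT
    simp only [DetStates, Set.mem_setOf_eq] at hS hT
    obtain ⟨α, hα, rfl⟩ := hS
    rcases List.eq_nil_or_concat' α with rfl | ⟨α', e, rfl⟩
    · obtain ⟨S', e, hDE⟩ := hinT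
      unfold DetEdge at hDE
      obtain ⟨β, hβ, hβe, hS'eq, rfl⟩ := hDE
      refine Or.inl ⟨s, Reaches.nil, fun y hy => ?_⟩
      obtain ⟨u, hu, hE⟩ := reaches_snoc' hy _ _ rfl
      exact hax1 s y hsrc ⟨u, e, hE⟩
    · exact absurd (show DetEdge E F s (Istr E s α') e (Istr E s (α' ++ [e])) from
        ⟨α', prefL_of_concat hα, hα, rfl, rfl⟩) (hnoS (Istr E s α') e)
  · -- smaller labels to smaller states
    intro S₁ e₁ T₁ S₂ e₂ T₂ h1 h2 hlt
    unfold DetEdge at h1 h2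
    obtain ⟨α₁, hα₁, hα₁e, rfl, rfl⟩ := h1
    obtain ⟨α₂, hα₂, hα₂e, rfl, rfl⟩ := h2
    obtain ⟨x, hx⟩ := nonempty_Istr hα₁e
    refine Or.inl ⟨x, hx, fun y hy => ?_⟩
    obtain ⟨u, hu, hEu⟩ := reaches_snoc' hx _ _ rfl
    obtain ⟨w, hw, hEw⟩ := reaches_snoc' hy _ _ rfl
    exact hax2 _ _ _ _ _ _ hEu hEw hlt
  · -- equal labels from ordered sources
    intro S₁ T₁ S₂ T₂ e h1 h2 hS
    unfold DetEdge at h1 h2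
    obtain ⟨α₁, hα₁, hα₁e, rfl, rfl⟩ := h1
    obtain ⟨α₂, hα₂, hα₂e, rfl, rfl⟩ := h2
    rcases colex_tri (α₁ ++ [e]) (α₂ ++ [e]) with heq | h | h
    · exact Or.inr (by rw [heq])
    · by_cases hEq : Istr E s (α₁ ++ [e]) = Istr E s (α₂ ++ [e])
      · exact Or.inr hEq
      · exact Or.inl (intv_of_colex hsrc hWfull h hEq)
    · exact absurd hS (not_intv_of_colex hsrc hWfull (colex_concat h)
        (nonempty_Istr hα₂) (nonempty_Istr hα₁))
  · -- language equality
    intro α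
    constructor
    · rintro ⟨hα, β, hβL, hsets⟩
      obtain ⟨w, hwF, hw⟩ := hβL
      exact ⟨w, hwF, (Set.ext_iff.mp hsets w).mpr hw⟩
    · intro hαL
      exact ⟨⟨[], by simpa using hαL⟩, α, hαL, rfl⟩
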